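/- Let γ : [a,b) → 𝔻² be a C¹ immersion into the Poincaré disk 𝔻² = {p ∈ ℝ² : |p| < 1} such that |γ(x)| → 1 as x → b. Then the hyperbolic length of γ, namely ∫ₐᵇ (2|∂ₓγ(x)|)/(1 − |γ(x)|²) dx, is infinite. -/

import Mathlib

open MeasureTheory Set Filter

/-- A C¹ immersion into the Poincaré disk whose boundary value approaches the unit circle
has infinite hyperbolic length. -/
theorem hyperbolic_length_infinite_of_approach_boundary
    (a b : ℝ) (hab : a < b)
    (γ γ' : ℝ → EuclideanSpace ℝ (Fin 2))
    (hderiv : ∀ x ∈ Ico a b, HasDerivAt γ (γ' x) x)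
    (hcont : ContinuousOn γ' (Ico a b))
    (himm : ∀ x ∈ Ico a b, γ' x ≠ 0)
    (hdisk : ∀ x ∈ Ico a b, ‖γ x‖ < 1)
    (hlim : Tendsto (fun x => ‖γ x‖) (nhdsWithin b (Iio b)) (nhds 1)) :
    ∫⁻ x in Ico a b, ENNReal.ofReal (2 * ‖γ' x‖ / (1 - ‖γ x‖ ^ 2)) = ⊤ := by
  by_contra hI
  set I := ∫⁻ x in Ico a b, ENNReal.ofReal (2 * ‖γ' x‖ / (1 - ‖γ x‖ ^ 2)) with hIdef
  set F : ℝ → ℝ := fun y => -Real.log (1 - ‖γ y‖ ^ 2) with hF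
  set g : ℝ → ℝ := fun y => (2 * (inner ℝ (γ y) (γ' y) : ℝ)) / (1 - ‖γ y‖ ^ 2) with hg
  set h : ℝ → ℝ := fun y => 2 * ‖γ' y‖ / (1 - ‖γ y‖ ^ 2) with hh
  have hpos : ∀ x ∈ Ico a b, 0 < 1 - ‖γ x‖ ^ 2 := by
    intro x hx
    have h1 := hdisk x hx
    nlinarith [norm_nonneg (γ x)]
  have hFderiv : ∀ x ∈ Ico a b, HasDerivAt F (g x) x := by
    intro x hx
    have hr : HasDerivAt (fun y => ‖γ y‖ ^ 2) (2 * (inner ℝ (γ x) (γ' x) : ℝ)) x := by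
      have := (hderiv x hx).inner ℝ (hderiv x hx)
      simp only [real_inner_self_eq_norm_sq] at this
      rw [real_inner_comm (γ x) (γ' x)] at this
      exact this.congr_deriv (by ring)
    have h1 : HasDerivAt (fun y => 1 - ‖γ y‖ ^ 2) (-(2 * (inner ℝ (γ x) (γ' x) : ℝ))) x := by
      exact ((hasDerivAt_const x (1:ℝ)).sub hr).congr_deriv (by simp)
    have h2 := (h1.log (ne_of_gt (hpos x hx))).neg
    refine h2.congr_deriv ?_
    simp only [hg]
    ring
  have hbound : ∀ x ∈ Ico a b, g x ≤ h x := by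
    intro x hx
    have hp := hpos x hx
    have hinner : (inner ℝ (γ x) (γ' x) : ℝ) ≤ ‖γ' x‖ := by
      calc (inner ℝ (γ x) (γ' x) : ℝ) ≤ ‖γ x‖ * ‖γ' x‖ := real_inner_le_norm _ _
        _ ≤ 1 * ‖γ' x‖ := by
            have := (hdisk x hx).le
            have := norm_nonneg (γ' x)
            nlinarith
        _ = ‖γ' x‖ := one_mul _
    simp only [hg, hh]
    gcongr
  -- continuity of γ on Ico a b
  have hγc : ContinuousOn γ (Ico a b) := fun x hx =>
    (hderiv x hx).continuousAt.continuousWithinAt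
  -- the key inequality for each c ∈ Ioo a b
  have key : ∀ c ∈ Ioo a b, F c - F a ≤ I.toReal := by
    intro c hc
    have hsub : Icc a c ⊆ Ico a b := Icc_subset_Ico_right hc.2
    have hac : a ≤ c := hc.1.le
    have hγc' : ContinuousOn γ (Icc a c) := hγc.mono hsub
    have hγ'c : ContinuousOn γ' (Icc a c) := hcont.mono hsub
    have hdc : ContinuousOn (fun y => 1 - ‖γ y‖ ^ 2) (Icc a c) :=
      continuousOn_const.sub ((hγc'.norm).pow 2)
    have hdne : ∀ x ∈ Icc a c, (1 - ‖γ x‖ ^ 2) ≠ 0 := fun x hx =>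
      ne_of_gt (hpos x (hsub hx))
    have hgc : ContinuousOn g (Icc a c) :=
      (continuousOn_const.mul (hγc'.inner hγ'c)).div hdc hdne
    have hhc : ContinuousOn h (Icc a c) :=
      (continuousOn_const.mul hγ'c.norm).div hdc hdne
    have hgint : IntervalIntegrable g volume a c := by
      apply ContinuousOn.intervalIntegrable
      rwa [uIcc_of_le hac]
    have hhint : IntervalIntegrable h volume a c := by
      apply ContinuousOn.intervalIntegrable
      rwa [uIcc_of_le hac]
    have ftc : ∫ x in a..c, g x = F c - F a := by
      apply intervalIntegral.integral_eq_sub_of_hasDerivAt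
      · intro x hx
        rw [uIcc_of_le hac] at hx
        exact hFderiv x (hsub hx)
      · exact hgint
    have hmono : ∫ x in a..c, g x ≤ ∫ x in a..c, h x := by
      apply intervalIntegral.integral_mono_on hac hgint hhint
      intro x hx
      exact hbound x (hsub hx)
    have hofReal : ENNReal.ofReal (∫ x in a..c, h x) ≤ I := by
      rw [intervalIntegral.integral_of_le hac]
      have hint' : IntegrableOn h (Ioc a c) volume := by
        rw [intervalIntegrable_iff_integrableOn_Ioc_of_le hac] at hhint
        exact hhint
      have hnn : 0 ≤ᵐ[volume.restrict (Ioc a c)] h := by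
        refine (ae_restrict_iff' measurableSet_Ioc).mpr (ae_of_all _ ?_)
        intro x hx
        have hp := hpos x (hsub (Ioc_subset_Icc_self hx))
        positivity
      rw [MeasureTheory.ofReal_integral_eq_lintegral_ofReal hint' hnn]
      exact lintegral_mono_set (Ioc_subset_Icc_self.trans hsub)
    calc F c - F a ≤ ∫ x in a..c, h x := ftc ▸ hmono
      _ ≤ I.toReal := by
          rw [← ENNReal.ofReal_le_iff_le_toReal hI]
          exact hofReal
  -- blow-up of F near b
  have hmem : Ioo a b ∈ nhdsWithin b (Iio b) := Ioo_mem_nhdsLT_of_mem ⟨hab, le_refl b⟩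
  have ht0 : Tendsto (fun c => 1 - ‖γ c‖ ^ 2) (nhdsWithin b (Iio b)) (nhds 0) := by
    have : Tendsto (fun c => 1 - ‖γ c‖ ^ 2) (nhdsWithin b (Iio b)) (nhds (1 - 1 ^ 2)) :=
      tendsto_const_nhds.sub (hlim.pow 2)
    simpa using this
  have ht : Tendsto (fun c => 1 - ‖γ c‖ ^ 2) (nhdsWithin b (Iio b)) (nhdsWithin 0 (Ioi 0)) := by
    apply tendsto_nhdsWithin_of_tendsto_nhds_of_eventually_within _ ht0
    filter_upwards [hmem] with c hc
    exact hpos c (Ioo_subset_Ico_self hc)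
  have hFtop : Tendsto F (nhdsWithin b (Iio b)) atTop := by
    have h2 := tendsto_neg_atBot_atTop.comp (Real.tendsto_log_nhdsGT_zero.comp ht)
    exact h2
  have hcontra : ∀ᶠ c in nhdsWithin b (Iio b), I.toReal + F a < F c :=
    hFtop.eventually_gt_atTop _
  have : ∀ᶠ c in nhdsWithin b (Iio b), False := by
    filter_upwards [hcontra, hmem] with c h1 h2
    have := key c h2
    linarith
  exact this.exists.choose_spec
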